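/- arXiv:1710.03178 — 2 statements merged into one kernel-verified Lean document; each statement's English description precedes it below -/
import Mathlib

section
/- With the sequences defined as in the broadcast construction applied to a connected graph G, for each i ≥ 1, if Iᵢ ≠ V(G), then Nᵢ ≠ ∅. -/
def nbhd {V : Type*} (G : SimpleGraph V) (X : Set V) : Set V :=
  {v | ∃ w ∈ X, G.Adj v w}

def dominates {V : Type*} (G : SimpleGraph V) (X Y : Set V) : Prop :=
  ∀ y ∈ Y, ∃ x ∈ X, G.Adj y x

theorem stmt_5 {V : Type*} [Fintype V] (G : SimpleGraph V) (hconn : G.Connected)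
    (hcard : 2 ≤ Fintype.card V)
    (s : V) (I U F D N : ℕ → Set V)
    (hI1 : I 1 = {s}) (hU1 : U 1 = Set.univ \ {s})
    (hF1 : F 1 = nbhd G {s}) (hN1 : N 1 = nbhd G {s}) (hD1 : D 1 = {s})
    (hI : ∀ i, 1 ≤ i → I (i + 1) = I i ∪ N i)
    (hU : ∀ i, 1 ≤ i → U (i + 1) = U i \ N i)
    (hF : ∀ i, 1 ≤ i → F (i + 1) = U (i + 1) ∩ nbhd G (I (i + 1)))
    (hDsub : ∀ i, 1 ≤ i → D (i + 1) ⊆ D i ∪ N i)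
    (hDdom : ∀ i, 1 ≤ i → dominates G (D (i + 1)) (F (i + 1)))
    (hDmin : ∀ i, 1 ≤ i → ∀ D' ⊆ D (i + 1), dominates G D' (F (i + 1)) → D' = D (i + 1))
    (hN : ∀ i, 1 ≤ i → N (i + 1) = {w ∈ F (i + 1) | ∃! d, d ∈ D (i + 1) ∧ G.Adj w d}) :
    ∀ i, 1 ≤ i → I i ≠ Set.univ → (N i).Nonempty := by
  -- invariant: s ∈ I i and U i = univ \ I i
  have hInv : ∀ i, 1 ≤ i → s ∈ I i ∧ U i = Set.univ \ I i := by
    intro i hi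
    induction i with
    | zero => omega
    | succ n ih =>
      rcases Nat.lt_or_ge n 1 with hn | hn
      · interval_cases n
        exact ⟨by rw [hI1]; rfl, by rw [hU1, hI1]⟩
      · obtain ⟨hs, hu⟩ := ih hn
        refine ⟨by rw [hI n hn]; exact Or.inl hs, ?_⟩
        rw [hU n hn, hI n hn, hu, Set.diff_diff]
  intro i hi hne
  -- find a crossing edge from I i to its complement
  obtain ⟨hs, -⟩ := hInv i hi
  have : ∃ u, u ∉ I i := by
    by_contra h
    push_neg at h
    exact hne (Set.eq_univ_of_forall h)
  obtain ⟨u, hu⟩ := this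
  obtain ⟨p⟩ := hconn.preconnected s u
  obtain ⟨dart, -, hd1, hd2⟩ := p.exists_boundary_dart (I i) hs hu
  obtain ⟨j, rfl⟩ : ∃ j, i = j + 1 := ⟨i - 1, by omega⟩
  rcases Nat.lt_or_ge j 1 with hj | hj
  · interval_cases j
    refine ⟨dart.snd, ?_⟩
    rw [hN1]
    refine ⟨dart.fst, ?_, dart.adj.symm⟩
    rw [hI1] at hd1; exact hd1
  · -- the frontier is nonempty
    have hyF : dart.snd ∈ F (j + 1) := by
      rw [hF j hj]
      exact ⟨by rw [(hInv (j+1) (by omega)).2]; exact ⟨trivial, hd2⟩,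
        ⟨dart.fst, hd1, dart.adj.symm⟩⟩
    by_contra hNempty
    rw [Set.not_nonempty_iff_eq_empty] at hNempty
    obtain ⟨d₀, hd₀D, -⟩ := hDdom j hj dart.snd hyF
    have hdom : dominates G (D (j + 1) \ {d₀}) (F (j + 1)) := by
      intro z hz
      obtain ⟨dz, hdz, hadj⟩ := hDdom j hj z hz
      have hnotuniq : ¬∃! d, d ∈ D (j + 1) ∧ G.Adj z d := by
        intro hcon
        have hmem : z ∈ N (j + 1) := by
          rw [hN j hj]; exact ⟨hz, hcon⟩
        rw [hNempty] at hmem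
        exact hmem
      have h2 : ∃ d', (d' ∈ D (j + 1) ∧ G.Adj z d') ∧ d' ≠ dz := by
        by_contra h2
        push_neg at h2
        exact hnotuniq ⟨dz, ⟨hdz, hadj⟩, fun w hw => h2 w hw⟩
      obtain ⟨d', ⟨hd'D, hd'adj⟩, hne'⟩ := h2
      by_cases hdz0 : dz = d₀
      · exact ⟨d', ⟨hd'D, by simp [hdz0 ▸ hne']⟩, hd'adj⟩
      · exact ⟨dz, ⟨hdz, by simp [hdz0]⟩, hadj⟩
    have heq := hDmin j hj _ Set.diff_subset hdom
    have : d₀ ∈ D (j + 1) \ {d₀} := by rw [heq]; exact hd₀D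
    exact this.2 rfl
end

section
/- With the sequences defined as in the broadcast construction, for all i ≥ 2, the set Dᵢ₋₁ ∪ Nᵢ₋₁ dominates all vertices of Fᵢ (hence a minimal dominating subset Dᵢ ⊆ Dᵢ₋₁ ∪ Nᵢ₋₁ for Fᵢ exists). -/
theorem stmt_6 {V : Type*} [Fintype V] (G : SimpleGraph V) (hconn : G.Connected)
    (s : V) (I U F D N : ℕ → Set V)
    (hI1 : I 1 = {s}) (hU1 : U 1 = Set.univ \ {s})
    (hF1 : F 1 = nbhd G {s}) (hN1 : N 1 = nbhd G {s}) (hD1 : D 1 = {s})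
    (hI : ∀ i, 1 ≤ i → I (i + 1) = I i ∪ N i)
    (hU : ∀ i, 1 ≤ i → U (i + 1) = U i \ N i)
    (hF : ∀ i, 1 ≤ i → F (i + 1) = U (i + 1) ∩ nbhd G (I (i + 1)))
    (hDdom : ∀ i, 1 ≤ i → dominates G (D i) (F i))
    (hNsub : ∀ i, 1 ≤ i → N i ⊆ F i) :
    ∀ i, 1 ≤ i → dominates G (D i ∪ N i) (F (i + 1)) := by
  intro i hi v hv
  rw [hF i hi] at hv
  obtain ⟨hvU, w, hwI, hadj⟩ := hv
  rw [hI i hi] at hwI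
  cases hwI with
  | inr hw => exact ⟨w, Or.inr hw, hadj⟩
  | inl hw =>
    -- v ∈ U (i+1) ⊆ U i and v ∈ nbhd (I i), so v ∈ F i
    have hvUi : v ∈ U i := by
      rw [hU i hi] at hvU; exact hvU.1
    have hvFi : v ∈ F i := by
      rcases Nat.exists_eq_add_of_le hi with ⟨k, rfl⟩
      cases k with
      | zero =>
        rw [hF1]
        rw [hI1] at hw
        exact ⟨w, hw, hadj⟩
      | succ n =>
        have h1 : 1 ≤ n + 1 := Nat.le_add_left 1 n
        have : (1 + (n+1)) = (n+1) + 1 := by ring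
        rw [this] at hvUi hw ⊢
        rw [hF (n+1) h1]
        exact ⟨hvUi, w, hw, hadj⟩
    obtain ⟨x, hx, hxadj⟩ := hDdom i hi v hvFi
    exact ⟨x, Or.inl hx, hxadj⟩
end
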